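/- Let R, l > 0 and let u be a unit vector in the Euclidean plane (EuclideanSpace ℝ (Fin 2), ‖u‖ = 1). Let N = ∫ over x ∈ ℝ² of the one-dimensional Lebesgue measure of {t ∈ [0, l] : x + t·u ∈ closedBall 0 R}, and let D = the Lebesgue measure of {x | ∃ t ∈ [0, l], x + t·u ∈ closedBall 0 R}. Then N/D = (1/l + 2/(πR))⁻¹; that is, the mean length ⟨L⟩ traversed inside the disk by uniformly placed segments of length l satisfies 1/⟨L⟩ = 1/l + 1/⟨σ⟩ with mean chord ⟨σ⟩ = πR/2. -/

import Mathlib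

open Metric MeasureTheory

section CauchyAux

open Real

private lemma cauchy_slice_eq (R l b : ℝ) (hl : 0 ≤ l) (hb : b^2 ≤ R^2) :
    {a : ℝ | ∃ t ∈ Set.Icc (0:ℝ) l, (a+t)^2 + b^2 ≤ R^2}
      = Set.Icc (-(Real.sqrt (R^2-b^2)) - l) (Real.sqrt (R^2-b^2)) := by
  set c := Real.sqrt (R^2 - b^2) with hc
  have hc0 : 0 ≤ c := Real.sqrt_nonneg _
  have hcsq : c^2 = R^2 - b^2 := Real.sq_sqrt (by linarith)
  ext a
  simp only [Set.mem_setOf_eq, Set.mem_Icc]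
  constructor
  · rintro ⟨t, ⟨ht0, htl⟩, hle⟩
    have h1 : (a+t)^2 ≤ c^2 := by linarith
    have h2 : |a+t| ≤ c := abs_le_of_sq_le_sq' (by simpa [sq_abs] using h1) hc0 |>.2
    rw [abs_le] at h2
    constructor <;> nlinarith [h2.1, h2.2]
  · rintro ⟨h1, h2⟩
    by_cases h : -c ≤ a
    · exact ⟨0, ⟨le_refl 0, hl⟩, by nlinarith⟩
    · refine ⟨-c - a, ⟨by linarith, by linarith⟩, by nlinarith⟩

private lemma cauchy_slice_empty (R l b : ℝ) (hb : R^2 < b^2) :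
    {a : ℝ | ∃ t ∈ Set.Icc (0:ℝ) l, (a+t)^2 + b^2 ≤ R^2} = ∅ := by
  ext a
  simp only [Set.mem_setOf_eq, Set.mem_empty_iff_false, iff_false]
  rintro ⟨t, _, hle⟩
  nlinarith [sq_nonneg (a+t)]

private lemma cauchy_sqrt_integral (R : ℝ) (hR : 0 < R) :
    ∫ x in (-R)..R, Real.sqrt (R^2 - x^2) = π * R^2 / 2 := by
  have h := intervalIntegral.integral_comp_mul_left
    (a := (-1:ℝ)) (b := 1) (c := R) (f := fun x => Real.sqrt (R^2 - x^2)) hR.ne'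
  have h2 : (∫ x in (-1:ℝ)..1, Real.sqrt (R^2 - (R*x)^2))
      = R * (π / 2) := by
    have : ∀ x : ℝ, Real.sqrt (R^2 - (R*x)^2) = R * Real.sqrt (1 - x^2) := by
      intro x
      rw [show R^2 - (R*x)^2 = R^2 * (1 - x^2) by ring, Real.sqrt_mul (sq_nonneg R),
        Real.sqrt_sq hR.le]
    simp_rw [this]
    rw [intervalIntegral.integral_const_mul, integral_sqrt_one_sub_sq]
  rw [h2, mul_neg_one, mul_one] at h
  have := h.symm
  rw [smul_eq_mul] at this
  field_simp at this ⊢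
  linarith [this]

private lemma cauchy_ball_vol (R : ℝ) (hR : 0 < R) :
    volume (closedBall (0 : EuclideanSpace ℝ (Fin 2)) R) = ENNReal.ofReal (π * R^2) := by
  rw [EuclideanSpace.volume_closedBall]
  simp only [Fintype.card_fin]
  rw [show ((2:ℕ):ℝ) / 2 + 1 = 2 by norm_num, Real.Gamma_two, div_one,
    Real.sq_sqrt pi_nonneg, ← ENNReal.ofReal_pow hR.le, ← ENNReal.ofReal_mul (by positivity)]
  ring_nf

private lemma cauchy_T_vol (R l : ℝ) (hR : 0 < R) (hl : 0 < l)
    (T : Set (ℝ × ℝ))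
    (hTdef : T = {p : ℝ × ℝ | ∃ t ∈ Set.Icc (0:ℝ) l, (p.2 + t)^2 + p.1^2 ≤ R^2})
    (hT : MeasurableSet T) :
    volume T = ENNReal.ofReal (π * R^2 + 2*R*l) := by
  rw [MeasureTheory.Measure.volume_eq_prod, Measure.prod_apply hT]
  have hslice : ∀ s : ℝ, volume (Prod.mk s ⁻¹' T)
      = (Set.Icc (-R) R).indicator
          (fun s => ENNReal.ofReal (2 * Real.sqrt (R^2 - s^2) + l)) s := by
    intro s
    have hps : Prod.mk s ⁻¹' T = {a : ℝ | ∃ t ∈ Set.Icc (0:ℝ) l, (a+t)^2 + s^2 ≤ R^2} := by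
      rw [hTdef]; rfl
    by_cases hs : s ∈ Set.Icc (-R) R
    · rw [Set.indicator_of_mem hs, hps,
        cauchy_slice_eq R l s hl.le (by rw [Set.mem_Icc] at hs; nlinarith [hs.1, hs.2]),
        Real.volume_Icc]
      congr 1
      ring
    · rw [Set.indicator_of_notMem hs, hps, cauchy_slice_empty R l s ?_, measure_empty]
      rw [Set.mem_Icc, not_and_or, not_le, not_le] at hs
      rcases hs with h | h <;> nlinarith
  simp_rw [hslice]
  rw [lintegral_indicator measurableSet_Icc]
  have hcont : Continuous (fun s : ℝ => 2 * Real.sqrt (R^2 - s^2) + l) := by fun_prop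
  have hnn : (fun _ : ℝ => (0:ℝ)) ≤ᵐ[volume.restrict (Set.Icc (-R) R)]
      fun s => 2 * Real.sqrt (R^2 - s^2) + l := by
    filter_upwards with s
    have := Real.sqrt_nonneg (R^2 - s^2)
    positivity
  rw [← MeasureTheory.ofReal_integral_eq_lintegral_ofReal
    (hcont.integrableOn_Icc.mono_measure le_rfl) hnn]
  congr 1
  rw [MeasureTheory.integral_Icc_eq_integral_Ioc,
    ← intervalIntegral.integral_of_le (by linarith : -R ≤ R)]
  have hsc : Continuous fun s : ℝ => Real.sqrt (R^2 - s^2) := by fun_prop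
  rw [intervalIntegral.integral_add (f := fun s : ℝ => 2 * Real.sqrt (R^2 - s^2)) ((continuous_const.mul hsc).intervalIntegrable _ _)
    intervalIntegrable_const]
  rw [intervalIntegral.integral_const_mul, cauchy_sqrt_integral R hR,
    intervalIntegral.integral_const]
  simp only [smul_eq_mul]
  ring

end CauchyAux

theorem cauchy_formula_segments_disk
    (R l : ℝ) (hR : 0 < R) (hl : 0 < l)
    (u : EuclideanSpace ℝ (Fin 2)) (hu : ‖u‖ = 1)
    (N D : ENNReal)
    (hN : N = ∫⁻ x : EuclideanSpace ℝ (Fin 2),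
        volume {t : ℝ | t ∈ Set.Icc (0 : ℝ) l ∧
          x + t • u ∈ closedBall (0 : EuclideanSpace ℝ (Fin 2)) R})
    (hD : D = volume {x : EuclideanSpace ℝ (Fin 2) |
        ∃ t ∈ Set.Icc (0 : ℝ) l,
          x + t • u ∈ closedBall (0 : EuclideanSpace ℝ (Fin 2)) R}) :
    N / D = ENNReal.ofReal ((1 / l + 2 / (Real.pi * R))⁻¹) := by
  set B := closedBall (0 : EuclideanSpace ℝ (Fin 2)) R with hB
  -- ==================== computation of N ====================
  set S : Set (EuclideanSpace ℝ (Fin 2) × ℝ) :=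
    {p | p.2 ∈ Set.Icc (0:ℝ) l ∧ p.1 + p.2 • u ∈ B} with hSdef
  have hcontS : Continuous fun p : EuclideanSpace ℝ (Fin 2) × ℝ => p.1 + p.2 • u := by fun_prop
  have hS : MeasurableSet S := by
    have : S = (fun p : EuclideanSpace ℝ (Fin 2) × ℝ => p.2) ⁻¹' Set.Icc 0 l ∩
        (fun p : EuclideanSpace ℝ (Fin 2) × ℝ => p.1 + p.2 • u) ⁻¹' B := rfl
    rw [this]
    exact (measurable_snd measurableSet_Icc).inter
      (hcontS.measurable (measurableSet_closedBall))
  have hNval : N = ENNReal.ofReal (Real.pi * R^2) * ENNReal.ofReal l := by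
    rw [hN]
    have h1 : (∫⁻ x : EuclideanSpace ℝ (Fin 2),
          volume {t : ℝ | t ∈ Set.Icc (0 : ℝ) l ∧ x + t • u ∈ B})
        = ∫⁻ x : EuclideanSpace ℝ (Fin 2), ∫⁻ t : ℝ, S.indicator 1 (x, t) := by
      congr 1; funext x
      rw [show {t : ℝ | t ∈ Set.Icc (0 : ℝ) l ∧ x + t • u ∈ B} = Prod.mk x ⁻¹' S from rfl,
        ← lintegral_indicator_one (hS.preimage measurable_prodMk_left)]
      congr 1
    rw [h1, lintegral_lintegral_swap]
    · have h2 : ∀ t : ℝ, (∫⁻ x : EuclideanSpace ℝ (Fin 2), S.indicator 1 (x, t))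
          = (Set.Icc (0:ℝ) l).indicator (fun _ => volume B) t := by
        intro t
        have hpre : (∫⁻ x : EuclideanSpace ℝ (Fin 2), S.indicator 1 (x, t))
            = volume ((fun x : EuclideanSpace ℝ (Fin 2) => (x, t)) ⁻¹' S) := by
          rw [← lintegral_indicator_one (hS.preimage measurable_prodMk_right)]
          congr 1
        rw [hpre]
        by_cases ht : t ∈ Set.Icc (0:ℝ) l
        · rw [Set.indicator_of_mem ht]
          have : ((fun x : EuclideanSpace ℝ (Fin 2) => (x, t)) ⁻¹' S)
              = (fun x : EuclideanSpace ℝ (Fin 2) => x + t • u) ⁻¹' B := by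
            ext x
            simp only [hSdef, Set.mem_preimage, Set.mem_setOf_eq]
            exact ⟨fun h => h.2, fun h => ⟨ht, h⟩⟩
          rw [this, measure_preimage_add_right]
        · rw [Set.indicator_of_notMem ht]
          have : ((fun x : EuclideanSpace ℝ (Fin 2) => (x, t)) ⁻¹' S) = ∅ := by
            ext x; simp only [hSdef, Set.mem_preimage, Set.mem_setOf_eq,
              Set.mem_empty_iff_false, iff_false, not_and]
            intro h1'; exact absurd h1' ht
          simp [this]
      simp_rw [h2]
      rw [lintegral_indicator_const measurableSet_Icc, Real.volume_Icc, sub_zero,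
        hB, cauchy_ball_vol R hR]
    · exact (measurable_one.indicator hS).aemeasurable
  -- ==================== computation of D ====================
  set SD : Set (EuclideanSpace ℝ (Fin 2)) :=
    {x : EuclideanSpace ℝ (Fin 2) | ∃ t ∈ Set.Icc (0:ℝ) l, x + t • u ∈ B} with hSDdef
  have hSDimg : SD = (fun p : EuclideanSpace ℝ (Fin 2) × ℝ => p.1 - p.2 • u)
      '' (B ×ˢ Set.Icc (0:ℝ) l) := by
    ext x
    simp only [hSDdef, Set.mem_setOf_eq, Set.mem_image, Set.mem_prod, Prod.exists]
    constructor
    · rintro ⟨t, ht, hxt⟩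
      exact ⟨x + t • u, t, ⟨hxt, ht⟩, by abel⟩
    · rintro ⟨y, t, ⟨hy, ht⟩, rfl⟩
      exact ⟨t, ht, by simpa [sub_add_cancel] using hy⟩
  have hSDcompact : IsCompact SD := by
    rw [hSDimg]
    exact ((isCompact_closedBall _ _).prod isCompact_Icc).image (by fun_prop)
  have hSD : MeasurableSet SD := hSDcompact.isClosed.measurableSet
  have hon : Orthonormal ℝ (({0} : Set (Fin 2)).restrict (fun _ : Fin 2 => u)) := by
    constructor
    · intro i; exact hu
    · intro i j hij
      exact absurd (Subtype.ext (by rw [i.2, j.2])) hij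
  obtain ⟨b, hb⟩ := hon.exists_orthonormalBasis_extension_of_card_eq
    (by simp [finrank_euclideanSpace])
  have hb0 : b 0 = u := hb 0 rfl
  have hswap : MeasurePreserving (Prod.swap : ℝ × ℝ → ℝ × ℝ) volume volume := by
    rw [MeasureTheory.Measure.volume_eq_prod]
    exact MeasureTheory.Measure.measurePreserving_swap
  have hmp : MeasurePreserving
      (fun p : ℝ × ℝ => b.repr.symm
        ((MeasurableEquiv.toLp 2 (Fin 2 → ℝ))
          (MeasurableEquiv.finTwoArrow.symm p.swap))) volume volume :=
    (b.measurePreserving_repr_symm).comp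
      (((EuclideanSpace.volume_preserving_symm_measurableEquiv_toLp (Fin 2)).symm).comp
        (((volume_preserving_finTwoArrow ℝ).symm).comp hswap))
  have hpre : (fun p : ℝ × ℝ => b.repr.symm
        ((MeasurableEquiv.toLp 2 (Fin 2 → ℝ))
          (MeasurableEquiv.finTwoArrow.symm p.swap))) ⁻¹' SD
      = {p : ℝ × ℝ | ∃ t ∈ Set.Icc (0:ℝ) l, (p.2 + t)^2 + p.1^2 ≤ R^2} := by
    ext ⟨s, a⟩
    simp only [Set.mem_preimage, hSDdef, Set.mem_setOf_eq]
    refine exists_congr fun t => and_congr_right fun ht => ?_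
    set y : EuclideanSpace ℝ (Fin 2) := (MeasurableEquiv.toLp 2 (Fin 2 → ℝ))
      (MeasurableEquiv.finTwoArrow.symm (Prod.swap (s, a))) with hy
    set e0 : EuclideanSpace ℝ (Fin 2) := EuclideanSpace.single 0 1 with he0
    set z : EuclideanSpace ℝ (Fin 2) := y + t • e0 with hz
    have hyadd : b.repr.symm y + t • u = b.repr.symm z := by
      rw [hz, map_add, LinearIsometryEquiv.map_smul, he0, b.repr_symm_single, hb0]
    rw [hyadd, hB, mem_closedBall_zero_iff, LinearIsometryEquiv.norm_map]
    have hcoords : ∀ i : Fin 2, z i = ![a + t, s] i := by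
      intro i
      fin_cases i <;>
        simp [hz, hy, he0, PiLp.add_apply, PiLp.smul_apply, EuclideanSpace.single_apply,
          MeasurableEquiv.coe_toLp,
          MeasurableEquiv.finTwoArrow, Prod.swap]
    rw [EuclideanSpace.norm_eq]
    rw [show (∑ i : Fin 2, ‖z i‖^2) = (a+t)^2 + s^2 by
      rw [Fin.sum_univ_two, hcoords 0, hcoords 1]
      simp [sq_abs]]
    constructor
    · intro h
      have := Real.sq_sqrt (by positivity : (0:ℝ) ≤ (a+t)^2 + s^2)
      nlinarith [Real.sqrt_nonneg ((a+t)^2 + s^2)]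
    · intro h
      rw [show R = Real.sqrt (R^2) from (Real.sqrt_sq hR.le).symm]
      exact Real.sqrt_le_sqrt h
  have hDval : D = ENNReal.ofReal (Real.pi * R^2 + 2*R*l) := by
    rw [hD, ← hmp.measure_preimage hSD.nullMeasurableSet, hpre]
    exact cauchy_T_vol R l hR hl _ rfl (hpre ▸ hmp.measurable hSD)
  -- ==================== final arithmetic ====================
  rw [hNval, hDval, ← ENNReal.ofReal_mul (by positivity),
    ← ENNReal.ofReal_div_of_pos (by positivity)]
  congr 1
  have hpi := Real.pi_pos
  rw [eq_comm, inv_eq_iff_eq_inv, eq_comm, inv_div]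
  field_simp
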